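/- For the adaptive inexact gradient method on a μ-PL function with L_k ≤ 2L, 16Lδ ≤ Δ², and per-step bound f(x_{k+1}) − f* ≤ (1 − μ/(4L_k))(f(x_k) − f*) + Δ²/(2L_k) + 2δ, one obtains f(x_{k+1}) − f* ≤ (1 − μ/(8L))^{k+1}(f(x_0) − f*) + 4Δ²/μ. -/
import Mathlib


theorem stmt18 {n : ℕ} (f : EuclideanSpace ℝ (Fin n) → ℝ) (L Lmin μ Δ δ fstar : ℝ)
    (hμ : 0 < μ) (hL : 0 < L) (hΔ : 0 ≤ Δ) (hδ : 0 ≤ δ)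
    (hLmin : μ / 4 ≤ Lmin)
    (hmin : ∀ y, fstar ≤ f y)
    (hnoise : 16 * L * δ ≤ Δ ^ 2)
    (Lk : ℕ → ℝ) (hLklb : ∀ k, Lmin ≤ Lk k) (hLkub : ∀ k, Lk k ≤ 2 * L)
    (x : ℕ → EuclideanSpace ℝ (Fin n))
    (hdec : ∀ k, f (x (k + 1)) - fstar ≤
      (1 - μ / (4 * Lk k)) * (f (x k) - fstar) + Δ ^ 2 / (2 * Lk k) + 2 * δ) :
    ∀ k : ℕ, f (x (k + 1)) - fstar ≤
      (1 - μ / (8 * L)) ^ (k + 1) * (f (x 0) - fstar) + 4 * Δ ^ 2 / μ := by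
  have hμ8L : μ ≤ 8 * L := by
    have h1 := hLklb 0; have h2 := hLkub 0; linarith
  have hr0 : 0 ≤ 1 - μ / (8 * L) := by
    rw [sub_nonneg, div_le_one (by linarith)]; linarith
  have hC : 0 ≤ 4 * Δ ^ 2 / μ := by positivity
  have key : ∀ k, f (x k) - fstar ≤
      (1 - μ / (8 * L)) ^ k * (f (x 0) - fstar) + 4 * Δ ^ 2 / μ := by
    intro k
    induction k with
    | zero => simp; linarith
    | succ k ih =>
      have hLkpos : 0 < Lk k := by have := hLklb k; linarith
      have e1 : μ / (8 * L) ≤ μ / (4 * Lk k) := by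
        apply div_le_div_of_nonneg_left hμ.le (by linarith) (by linarith [hLkub k])
      have e2 : μ / (4 * Lk k) ≤ 1 := by
        rw [div_le_one (by linarith)]; have := hLklb k; linarith
      have e3 : Δ ^ 2 / (4 * L) ≤ Δ ^ 2 / (2 * Lk k) := by
        apply div_le_div_of_nonneg_left (by positivity) (by linarith) (by linarith [hLkub k])
      have e4 : 2 * δ ≤ Δ ^ 2 / (4 * L) := by
        rw [le_div_iff₀ (by linarith)]
        nlinarith [mul_nonneg hL.le hδ]
      have e5 : Δ ^ 2 / (2 * Lk k) + Δ ^ 2 / (2 * Lk k) = (μ / (4 * Lk k)) * (4 * Δ ^ 2 / μ) := by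
        field_simp; ring
      have hg0 : 0 ≤ (1 - μ / (8 * L)) ^ k * (f (x 0) - fstar) :=
        mul_nonneg (pow_nonneg hr0 k) (by linarith [hmin (x 0)])
      have h2 : (1 - μ / (4 * Lk k)) * (f (x k) - fstar) ≤
          (1 - μ / (4 * Lk k)) * ((1 - μ / (8 * L)) ^ k * (f (x 0) - fstar) + 4 * Δ ^ 2 / μ) :=
        mul_le_mul_of_nonneg_left ih (by linarith)
      have h3 : (1 - μ / (4 * Lk k)) * ((1 - μ / (8 * L)) ^ k * (f (x 0) - fstar)) ≤
          (1 - μ / (8 * L)) * ((1 - μ / (8 * L)) ^ k * (f (x 0) - fstar)) :=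
        mul_le_mul_of_nonneg_right (by linarith) hg0
      have hd := hdec k
      rw [pow_succ]
      rw [mul_add] at h2
      nlinarith [h2, h3, hd, e3, e4, e5]
  intro k
  exact key (k + 1)
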